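/- Let H₁ ≤ S_e, H₂ ≤ S_d be transitive and G = H₁ ≀ H₂. If g = ((h_{1,1},…,h_{1,d}),1) ∈ G has exactly one nontrivial base coordinate h_{1,1} = h with ind(h) = ind(H₁) minimal, then ind(g) = ind(H₁); conversely every element of G of minimal index ind(G) is conjugate in G to an element of this form. -/

import Mathlib

/-- Number of orbits of the cyclic group generated by a permutation. -/
noncomputable def orbCount {α : Type*} [Fintype α] (g : Equiv.Perm α) : ℕ :=
  Nat.card (MulAction.orbitRel.Quotient (Subgroup.zpowers g) α)

/-- The index of a permutation: `ind(g) = n - #orbits(⟨g⟩)`. -/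
noncomputable def permInd {α : Type*} [Fintype α] (g : Equiv.Perm α) : ℕ :=
  Fintype.card α - orbCount g

/-- The index of a permutation group: the minimum of `permInd g` over `1 ≠ g ∈ G`. -/
noncomputable def grpInd {α : Type*} [Fintype α] (G : Subgroup (Equiv.Perm α)) : ℕ :=
  sInf {m | ∃ g ∈ G, g ≠ 1 ∧ permInd g = m}

/-- A subgroup of permutations is transitive. -/
def IsTransitive {α : Type*} (G : Subgroup (Equiv.Perm α)) : Prop :=
  ∀ i j : α, ∃ g ∈ G, g i = j

/-- `B` is a block for the permutation group `G`. -/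
def IsBlockOf {α : Type*} (G : Subgroup (Equiv.Perm α)) (B : Set α) : Prop :=
  ∀ g ∈ G, (⇑g '' B = B ∨ Disjoint (⇑g '' B) B)

/-- `G` is a primitive permutation group. -/
def IsPrimitive {α : Type*} (G : Subgroup (Equiv.Perm α)) : Prop :=
  IsTransitive G ∧ ∀ B : Set α, IsBlockOf G B → B.Subsingleton ∨ B = Set.univ

/-- The element of the imprimitive wreath product acting on `Fin d × Fin e` given by
`(i, x) ↦ (h i, f i x)`: the blocks `{i} × Fin e` are permuted by `h` and the `i`-th
base coordinate `f i` acts inside the block. -/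
def wrElem {e d : ℕ} (h : Equiv.Perm (Fin d)) (f : Fin d → Equiv.Perm (Fin e)) :
    Equiv.Perm (Fin d × Fin e) := Equiv.prodShear h f

lemma wrElem_mul {e d : ℕ} (h h' : Equiv.Perm (Fin d)) (f f' : Fin d → Equiv.Perm (Fin e)) :
    wrElem h f * wrElem h' f' = wrElem (h * h') (fun i => f (h' i) * f' i) := by
  ext p <;> simp [wrElem, Equiv.prodShear, Equiv.Perm.mul_apply]

lemma wrElem_one {e d : ℕ} :
    (wrElem (1 : Equiv.Perm (Fin d)) (fun _ => (1 : Equiv.Perm (Fin e)))) = 1 := by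
  ext p <;> simp [wrElem, Equiv.prodShear]

/-- The imprimitive wreath product `H₁ ≀ H₂ = H₁^d ⋊ H₂` as a subgroup of the
permutations of `Fin d × Fin e`. -/
def wreath {e d : ℕ} (H₁ : Subgroup (Equiv.Perm (Fin e))) (H₂ : Subgroup (Equiv.Perm (Fin d))) :
    Subgroup (Equiv.Perm (Fin d × Fin e)) where
  carrier := {g | ∃ h f, h ∈ H₂ ∧ (∀ i, f i ∈ H₁) ∧ g = wrElem h f}
  one_mem' := ⟨1, fun _ => 1, H₂.one_mem, fun _ => H₁.one_mem, wrElem_one.symm⟩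
  mul_mem' := by
    rintro a b ⟨h, f, hh, hf, rfl⟩ ⟨h', f', hh', hf', rfl⟩
    exact ⟨h * h', fun i => f (h' i) * f' i, H₂.mul_mem hh hh',
      fun i => H₁.mul_mem (hf _) (hf' _), wrElem_mul h h' f f'⟩
  inv_mem' := by
    rintro a ⟨h, f, hh, hf, rfl⟩
    refine ⟨h⁻¹, fun j => (f (h⁻¹ j))⁻¹, H₂.inv_mem hh, fun j => H₁.inv_mem (hf _), ?_⟩
    apply inv_eq_of_mul_eq_one_right
    rw [wrElem_mul]
    simp only [mul_inv_cancel]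
    exact wrElem_one

section OrbAux

open MulAction

lemma mem_orbit_zpowers_iff {α : Type*} (g : Equiv.Perm α) (x y : α) :
    y ∈ MulAction.orbit (Subgroup.zpowers g) x ↔ ∃ k : ℤ, (g ^ k) x = y := by
  constructor
  · rintro ⟨⟨c, k, rfl⟩, rfl⟩; exact ⟨k, rfl⟩
  · rintro ⟨k, rfl⟩; exact ⟨⟨g ^ k, k, rfl⟩, rfl⟩

lemma orbQ_mk_eq_iff {α : Type*} (g : Equiv.Perm α) (x y : α) :
    (Quotient.mk'' x : MulAction.orbitRel.Quotient (Subgroup.zpowers g) α) = Quotient.mk'' y ↔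
      ∃ k : ℤ, (g ^ k) y = x := by
  rw [Quotient.eq'']
  rw [show ((MulAction.orbitRel (Subgroup.zpowers g) α) x y) ↔
      x ∈ MulAction.orbit (Subgroup.zpowers g) y from MulAction.orbitRel_apply]
  exact mem_orbit_zpowers_iff g y x

lemma orbQ_surjective {α : Type*} (g : Equiv.Perm α) :
    Function.Surjective
      (Quotient.mk'' : α → MulAction.orbitRel.Quotient (Subgroup.zpowers g) α) :=
  fun q => ⟨q.out, q.out_eq'⟩

lemma orbCount_le_card {α : Type*} [Fintype α] (g : Equiv.Perm α) :
    orbCount g ≤ Fintype.card α := by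
  rw [orbCount, ← Nat.card_eq_fintype_card]
  exact Nat.card_le_card_of_surjective _ (orbQ_surjective g)

lemma orbCount_one {α : Type*} [Fintype α] :
    orbCount (1 : Equiv.Perm α) = Fintype.card α := by
  rw [orbCount, ← Nat.card_eq_fintype_card]
  refine (Nat.card_eq_of_bijective Quotient.mk'' ⟨?_, orbQ_surjective 1⟩).symm
  intro x y h
  obtain ⟨k, hk⟩ := (orbQ_mk_eq_iff 1 x y).mp h
  simpa using hk.symm

lemma orbCount_lt_card {α : Type*} [Fintype α] {g : Equiv.Perm α} (hg : g ≠ 1) :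
    orbCount g < Fintype.card α := by
  refine lt_of_le_of_ne (orbCount_le_card g) ?_
  intro hcard
  obtain ⟨x, hx⟩ : ∃ x, g x ≠ x := by
    by_contra hc
    push_neg at hc
    exact hg (Equiv.ext hc)
  haveI : Fintype (MulAction.orbitRel.Quotient (Subgroup.zpowers g) α) := Fintype.ofFinite _
  have hcard' : Fintype.card α =
      Fintype.card (MulAction.orbitRel.Quotient (Subgroup.zpowers g) α) := by
    rw [← hcard, orbCount, Nat.card_eq_fintype_card]
  have hbij := (Fintype.bijective_iff_surjective_and_card
    (Quotient.mk'' : α → MulAction.orbitRel.Quotient (Subgroup.zpowers g) α)).mpr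
    ⟨orbQ_surjective g, hcard'⟩
  have : g x = x := hbij.injective ((orbQ_mk_eq_iff g (g x) x).mpr ⟨1, by simp⟩)
  exact hx this

lemma permInd_one {α : Type*} [Fintype α] : permInd (1 : Equiv.Perm α) = 0 := by
  rw [permInd, orbCount_one, Nat.sub_self]

lemma permInd_pos {α : Type*} [Fintype α] {g : Equiv.Perm α} (hg : g ≠ 1) :
    1 ≤ permInd g := by
  have := orbCount_lt_card hg
  rw [permInd]; omega

lemma wrElem_apply {e d : ℕ} (h : Equiv.Perm (Fin d)) (f : Fin d → Equiv.Perm (Fin e))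
    (p : Fin d × Fin e) : wrElem h f p = (h p.1, f p.1 p.2) := rfl

lemma wrElem_inv {e d : ℕ} (h : Equiv.Perm (Fin d)) (f : Fin d → Equiv.Perm (Fin e)) :
    (wrElem h f)⁻¹ = wrElem h⁻¹ (fun j => (f (h⁻¹ j))⁻¹) := by
  apply inv_eq_of_mul_eq_one_right
  rw [wrElem_mul]
  simp only [mul_inv_cancel]
  exact wrElem_one

lemma wrElem_zpow {e d : ℕ} (σ : Equiv.Perm (Fin d)) (f : Fin d → Equiv.Perm (Fin e)) :
    ∀ k : ℤ, ∃ f', (wrElem σ f) ^ k = wrElem (σ ^ k) f' := by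
  have hn : ∀ n : ℕ, ∃ f', (wrElem σ f) ^ n = wrElem (σ ^ n) f' := by
    intro n
    induction n with
    | zero => exact ⟨fun _ => 1, by rw [pow_zero, pow_zero]; exact wrElem_one.symm⟩
    | succ n ih =>
      obtain ⟨f', hf'⟩ := ih
      exact ⟨_, by rw [pow_succ, pow_succ, hf', wrElem_mul]⟩
  intro k
  cases k with
  | ofNat n =>
    obtain ⟨f', hf'⟩ := hn n
    exact ⟨f', by rw [Int.ofNat_eq_coe, zpow_natCast, zpow_natCast, hf']⟩
  | negSucc n =>
    obtain ⟨f', hf'⟩ := hn (n + 1)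
    exact ⟨_, by rw [zpow_negSucc, zpow_negSucc, hf', wrElem_inv]⟩

/-- `wrElem 1` as a monoid hom. -/
def wrElemHom (e d : ℕ) : (Fin d → Equiv.Perm (Fin e)) →* Equiv.Perm (Fin d × Fin e) where
  toFun f := wrElem 1 f
  map_one' := wrElem_one
  map_mul' f f' := by
    rw [wrElem_mul]
    rfl

lemma wrElem_one_zpow {e d : ℕ} (f : Fin d → Equiv.Perm (Fin e)) (k : ℤ) :
    (wrElem 1 f) ^ k = wrElem 1 (fun i => (f i) ^ k) := by
  have := (map_zpow (wrElemHom e d) f k).symm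
  exact this

lemma orbCount_wrElem_one {e d : ℕ} (f : Fin d → Equiv.Perm (Fin e)) :
    orbCount (wrElem 1 f) = ∑ i, orbCount (f i) := by
  classical
  set g := wrElem (1 : Equiv.Perm (Fin d)) f with hg
  have key : ∀ p q : Fin d × Fin e,
      (Quotient.mk'' p : MulAction.orbitRel.Quotient (Subgroup.zpowers g) (Fin d × Fin e)) =
        Quotient.mk'' q ↔ p.1 = q.1 ∧
        (Quotient.mk'' p.2 : MulAction.orbitRel.Quotient (Subgroup.zpowers (f q.1)) (Fin e)) =
          Quotient.mk'' q.2 := by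
    intro p q
    rw [orbQ_mk_eq_iff, orbQ_mk_eq_iff]
    constructor
    · rintro ⟨k, hk⟩
      simp only [hg, wrElem_one_zpow, wrElem_apply, Equiv.Perm.coe_one, id_eq] at hk
      exact ⟨(congrArg Prod.fst hk).symm, k, congrArg Prod.snd hk⟩
    · rintro ⟨h1, k, hk⟩
      refine ⟨k, ?_⟩
      simp only [hg, wrElem_one_zpow, wrElem_apply, Equiv.Perm.coe_one, id_eq]
      exact Prod.ext h1.symm hk
  -- the bijection
  let F : MulAction.orbitRel.Quotient (Subgroup.zpowers g) (Fin d × Fin e) →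
      Σ i : Fin d, MulAction.orbitRel.Quotient (Subgroup.zpowers (f i)) (Fin e) :=
    Quotient.lift (fun p => ⟨p.1, Quotient.mk'' p.2⟩)
      (by
        intro p q hpq
        have h := (key p q).mp (Quotient.sound' hpq)
        obtain ⟨h1, h2⟩ := h
        cases p with
        | mk p1 p2 =>
        cases q with
        | mk q1 q2 =>
        simp only at h1 h2
        subst h1
        simp only [Sigma.mk.inj_iff, heq_eq_eq, true_and]
        exact h2)
  have hbij : Function.Bijective F := by
    constructor
    · intro a b hab
      induction a using Quotient.inductionOn' with
      | h p =>
      induction b using Quotient.inductionOn' with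
      | h q =>
      have hab' : (⟨p.1, Quotient.mk'' p.2⟩ :
          Σ i : Fin d, MulAction.orbitRel.Quotient (Subgroup.zpowers (f i)) (Fin e)) =
          ⟨q.1, Quotient.mk'' q.2⟩ := hab
      obtain ⟨h1, h2⟩ := Sigma.mk.inj_iff.mp hab'
      cases p with
      | mk p1 p2 =>
      cases q with
      | mk q1 q2 =>
      simp only at h1
      subst h1
      exact (key _ _).mpr ⟨rfl, eq_of_heq h2⟩
    · rintro ⟨i, x⟩
      induction x using Quotient.inductionOn' with
      | h x =>
      exact ⟨Quotient.mk'' (i, x), rfl⟩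
  have hcard := Nat.card_eq_of_bijective F hbij
  rw [orbCount, hcard]
  haveI : ∀ i : Fin d,
      Fintype (MulAction.orbitRel.Quotient (Subgroup.zpowers (f i)) (Fin e)) :=
    fun i => Fintype.ofFinite _
  rw [Nat.card_eq_fintype_card, Fintype.card_sigma]
  congr 1
  funext i
  rw [orbCount, Nat.card_eq_fintype_card]

lemma permInd_wrElem_one {e d : ℕ} (f : Fin d → Equiv.Perm (Fin e)) :
    permInd (wrElem 1 f) = ∑ i, permInd (f i) := by
  rw [permInd, orbCount_wrElem_one]
  have hle : ∀ i ∈ Finset.univ, orbCount (f i) ≤ Fintype.card (Fin e) :=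
    fun i _ => orbCount_le_card (f i)
  calc Fintype.card (Fin d × Fin e) - ∑ i, orbCount (f i)
      = ∑ _i : Fin d, Fintype.card (Fin e) - ∑ i, orbCount (f i) := by
        rw [Fintype.card_prod, Finset.sum_const, Finset.card_univ, smul_eq_mul]
    _ = ∑ i, (Fintype.card (Fin e) - orbCount (f i)) :=
        (Finset.sum_tsub_distrib Finset.univ hle).symm
    _ = ∑ i, permInd (f i) := rfl

lemma orbCount_wrElem_le {e d : ℕ} (σ : Equiv.Perm (Fin d)) (f : Fin d → Equiv.Perm (Fin e)) :
    orbCount (wrElem σ f) ≤ orbCount σ * e := by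
  classical
  set g := wrElem σ f with hg
  -- projection to the quotient of σ
  have hproj : ∀ p q : Fin d × Fin e,
      MulAction.orbitRel (Subgroup.zpowers g) (Fin d × Fin e) p q →
      (Quotient.mk'' p.1 : MulAction.orbitRel.Quotient (Subgroup.zpowers σ) (Fin d)) =
        Quotient.mk'' q.1 := by
    intro p q hpq
    have h := (orbQ_mk_eq_iff g p q).mp (Quotient.sound' hpq)
    obtain ⟨k, hk⟩ := h
    obtain ⟨f', hf'⟩ := wrElem_zpow σ f k
    rw [orbQ_mk_eq_iff]
    refine ⟨k, ?_⟩
    rw [hg, hf', wrElem_apply] at hk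
    exact congrArg Prod.fst hk
  let π : MulAction.orbitRel.Quotient (Subgroup.zpowers g) (Fin d × Fin e) →
      MulAction.orbitRel.Quotient (Subgroup.zpowers σ) (Fin d) :=
    Quotient.lift (fun p => Quotient.mk'' p.1) hproj
  have hkey : ∀ quo : MulAction.orbitRel.Quotient (Subgroup.zpowers g) (Fin d × Fin e),
      ∃ y : Fin e, (Quotient.mk'' ((π quo).out, y) :
        MulAction.orbitRel.Quotient (Subgroup.zpowers g) (Fin d × Fin e)) = quo := by
    intro quo
    have h1 : (Quotient.mk'' (π quo).out :
        MulAction.orbitRel.Quotient (Subgroup.zpowers σ) (Fin d)) =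
        Quotient.mk'' (quo.out).1 := by
      rw [Quotient.out_eq']
      conv_lhs => rw [← Quotient.out_eq' quo]
      rfl
    obtain ⟨k, hk⟩ := (orbQ_mk_eq_iff σ _ _).mp h1
    obtain ⟨f', hf'⟩ := wrElem_zpow σ f k
    refine ⟨f' (quo.out).1 (quo.out).2, ?_⟩
    have : (g ^ k) quo.out = ((π quo).out, f' (quo.out).1 (quo.out).2) := by
      show (wrElem σ f ^ k) quo.out = _
      rw [hf', wrElem_apply, hk]
    conv_rhs => rw [← Quotient.out_eq' quo]
    rw [orbQ_mk_eq_iff]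
    exact ⟨k, this⟩
  let F : MulAction.orbitRel.Quotient (Subgroup.zpowers g) (Fin d × Fin e) →
      (MulAction.orbitRel.Quotient (Subgroup.zpowers σ) (Fin d)) × Fin e :=
    fun quo => (π quo, Classical.choose (hkey quo))
  have hinj : Function.Injective F := by
    intro a b hab
    have ha := Classical.choose_spec (hkey a)
    have hb := Classical.choose_spec (hkey b)
    calc a = Quotient.mk'' ((π a).out, Classical.choose (hkey a)) := ha.symm
      _ = Quotient.mk'' ((π b).out, Classical.choose (hkey b)) := by
          exact congrArg (fun p : (MulAction.orbitRel.Quotient (Subgroup.zpowers σ) (Fin d)) × Fin e =>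
            (Quotient.mk'' (p.1.out, p.2) :
              MulAction.orbitRel.Quotient (Subgroup.zpowers g) (Fin d × Fin e))) hab
      _ = b := hb
  have hle := Nat.card_le_card_of_injective F hinj
  rw [orbCount]
  calc Nat.card (MulAction.orbitRel.Quotient (Subgroup.zpowers g) (Fin d × Fin e)) ≤ _ := hle
    _ = orbCount σ * e := by
        rw [Nat.card_prod,
          show Nat.card (Fin e) = e from Nat.card_eq_fintype_card.trans (Fintype.card_fin e)]
        rfl
end OrbAux

lemma update_mem_wreath {e d : ℕ} (H₁ : Subgroup (Equiv.Perm (Fin e)))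
    (H₂ : Subgroup (Equiv.Perm (Fin d))) {h : Equiv.Perm (Fin e)} (hh : h ∈ H₁) (i₀ : Fin d) :
    wrElem 1 (Function.update (fun _ => 1) i₀ h) ∈ wreath H₁ H₂ := by
  classical
  refine ⟨1, _, H₂.one_mem, ?_, rfl⟩
  intro i
  rcases eq_or_ne i i₀ with rfl | hne
  · rw [Function.update_self]; exact hh
  · rw [Function.update_of_ne hne]; exact H₁.one_mem

lemma permInd_update {e d : ℕ} (h : Equiv.Perm (Fin e)) (i₀ : Fin d) :
    permInd (wrElem 1 (Function.update (fun _ => 1) i₀ h)) = permInd h := by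
  classical
  rw [permInd_wrElem_one]
  rw [Finset.sum_eq_single i₀]
  · rw [Function.update_self]
  · intro j _ hj
    rw [Function.update_of_ne hj, permInd_one]
  · intro hj
    exact absurd (Finset.mem_univ i₀) hj

/-- In `G = H₁ ≀ H₂`: an element with trivial top component and exactly one nontrivial base
coordinate `h` of minimal index has index `ind(H₁)`; conversely, every element of `G` of
minimal index `ind(G)` is conjugate in `G` to an element of this form. -/
theorem stmt_18 {e d : ℕ} (hd : 0 < d) (H₁ : Subgroup (Equiv.Perm (Fin e)))
    (H₂ : Subgroup (Equiv.Perm (Fin d)))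
    (h1 : IsTransitive H₁) (h2 : IsTransitive H₂) (hne : H₁ ≠ ⊥) :
    (∀ h : Equiv.Perm (Fin e), h ∈ H₁ → h ≠ 1 → permInd h = grpInd H₁ →
      ∀ i₀ : Fin d, permInd (wrElem 1 (Function.update (fun _ => 1) i₀ h)) = grpInd H₁) ∧
    (∀ g ∈ wreath H₁ H₂, g ≠ 1 → permInd g = grpInd (wreath H₁ H₂) →
      ∃ c ∈ wreath H₁ H₂, ∃ h ∈ H₁, h ≠ 1 ∧ permInd h = grpInd H₁ ∧
        ∃ i₀ : Fin d, c * g * c⁻¹ = wrElem 1 (Function.update (fun _ => 1) i₀ h)) := by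
  classical
  constructor
  · intro h hH hne1 hind i₀
    rw [permInd_update, hind]
  · -- setup: a minimal element h₀ of H₁
    have hSne : {m | ∃ g ∈ H₁, g ≠ 1 ∧ permInd g = m}.Nonempty := by
      obtain ⟨⟨a, haH⟩, ha⟩ := Subgroup.ne_bot_iff_exists_ne_one.mp hne
      have ha' : a ≠ 1 := by
        intro h; apply ha; exact Subtype.ext h
      exact ⟨permInd a, a, haH, ha', rfl⟩
    obtain ⟨h₀, h₀H, h₀ne, h₀ind⟩ := Nat.sInf_mem hSne
    have h₀pos : 1 ≤ grpInd H₁ := by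
      have := permInd_pos h₀ne
      rw [h₀ind] at this
      exact this
    -- a moved point of h₀, so e > 0 and grpInd H₁ ≤ e - 1
    obtain ⟨x₀, hx₀⟩ : ∃ x, h₀ x ≠ x := by
      by_contra hc
      push_neg at hc
      exact h₀ne (Equiv.ext hc)
    have hepos : 0 < e := Fin.pos x₀
    have horb₀ : 1 ≤ orbCount h₀ := by
      have : Nonempty (MulAction.orbitRel.Quotient (Subgroup.zpowers h₀) (Fin e)) :=
        ⟨Quotient.mk'' x₀⟩
      exact Nat.one_le_iff_ne_zero.mpr (Nat.card_ne_zero.mpr ⟨this, Finite.of_fintype _⟩)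
    have hgrp_lt_e : grpInd H₁ < e := by
      have : permInd h₀ < e := by rw [permInd, Fintype.card_fin]; omega
      rw [h₀ind] at this
      exact this
    -- minimal index of the wreath product is ≤ grpInd H₁
    have i₀' : Fin d := ⟨0, hd⟩
    have hw : grpInd (wreath H₁ H₂) ≤ grpInd H₁ := by
      apply Nat.sInf_le
      refine ⟨wrElem 1 (Function.update (fun _ => 1) i₀' h₀),
        update_mem_wreath H₁ H₂ h₀H i₀', ?_, by rw [permInd_update]; exact h₀ind⟩
      intro hc
      have := congrArg (fun p => p (i₀', x₀)) hc
      simp only [wrElem_apply, Function.update_self, Equiv.Perm.coe_one, id_eq] at this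
      exact hx₀ (congrArg Prod.snd this)
    rintro g ⟨σ, f, hσ, hf, rfl⟩ gne gind
    rcases eq_or_ne σ 1 with rfl | hσne
    · -- trivial top: g = wrElem 1 f
      have hsum : permInd (wrElem 1 f) = ∑ i, permInd (f i) := permInd_wrElem_one f
      have hlow : ∀ i, f i ≠ 1 → grpInd H₁ ≤ permInd (f i) := by
        intro i hi
        exact Nat.sInf_le ⟨f i, hf i, hi, rfl⟩
      obtain ⟨i₀, hi₀⟩ : ∃ i, f i ≠ 1 := by
        by_contra hc
        push_neg at hc
        apply gne
        have : f = fun _ => 1 := funext hc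
        rw [this]
        exact wrElem_one
      -- all other coordinates are 1
      have hothers : ∀ j, j ≠ i₀ → f j = 1 := by
        intro j hj
        by_contra hjne
        have hsub : ({i₀, j} : Finset (Fin d)) ⊆ Finset.univ := Finset.subset_univ _
        have h2sum : permInd (f i₀) + permInd (f j) ≤ ∑ i, permInd (f i) := by
          have := Finset.sum_le_sum_of_subset (f := fun i => permInd (f i)) hsub
          rwa [Finset.sum_pair (Ne.symm hj)] at this
        have hle1 := hlow i₀ hi₀
        have hle2 := hlow j hjne
        have : permInd (wrElem 1 f) ≤ grpInd H₁ := le_trans (le_of_eq gind) hw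
        omega
      have hval : permInd (wrElem 1 f) = permInd (f i₀) := by
        rw [hsum, Finset.sum_eq_single i₀]
        · intro j _ hj
          rw [hothers j hj, permInd_one]
        · intro hj
          exact absurd (Finset.mem_univ i₀) hj
      have hfi₀ind : permInd (f i₀) = grpInd H₁ :=
        le_antisymm (by rw [← hval, gind]; exact hw) (hlow i₀ hi₀)
      refine ⟨1, (wreath H₁ H₂).one_mem, f i₀, hf i₀, hi₀, hfi₀ind, i₀, ?_⟩
      rw [one_mul, inv_one, mul_one]
      congr 1
      funext j
      rcases eq_or_ne j i₀ with rfl | hj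
      · rw [Function.update_self]
      · rw [Function.update_of_ne hj, hothers j hj]
    · -- nontrivial top: contradiction
      exfalso
      have hlt : orbCount σ < d := by simpa using orbCount_lt_card hσne
      have h1' : orbCount σ * e ≤ (d - 1) * e :=
        Nat.mul_le_mul_right e (by omega)
      have h2' : (d - 1) * e = d * e - e := by
        rw [Nat.sub_one_mul]
      have h3' : orbCount (wrElem σ f) ≤ d * e - e := by
        have := orbCount_wrElem_le σ f
        omega
      have hde : e ≤ d * e := Nat.le_mul_of_pos_left e hd
      have hbig : e ≤ permInd (wrElem σ f) := by
        rw [permInd, Fintype.card_prod, Fintype.card_fin, Fintype.card_fin]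
        omega
      have : permInd (wrElem σ f) ≤ grpInd H₁ := le_trans (le_of_eq gind) hw
      omega
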